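/- Under the hypotheses of the KGSM theorem, the one-step conditional expectation satisfies E_{i_0,...,i_{k-1}}⟨x_{k+1}, v_l⟩ = r⟨x_k, v_l⟩ - ζ S_{k-1}, where r = 1 - σ_l²/||A||_F² + M(1-β), ζ = M(1-β)², and S_n = ∑_{j=1}^{n} β^{n-j}⟨x_j, v_l⟩ + (β^n/(1-β))⟨x_0, v_l⟩ (assuming the solution x = 0). -/

import Mathlib

open Matrix Finset

/-- one-step conditional expectation for KGSM (with solution
`x = 0`, i.e. `b = 0`): conditionally on the first `k` indices `ω 0, …, ω (k-1)`,
averaging only over the choice `i` of the `k`-th row gives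
`E⟨x_{k+1}, v⟩ = r⟨x_k, v⟩ - ζ S_{k-1}`. -/
theorem kgsm_one_step_conditional_expectation {m n : ℕ}
    (A : Matrix (Fin m) (Fin n) ℝ)
    (hrow : ∀ i, A i ⬝ᵥ A i ≠ 0)
    (F : ℝ) (hF : F = ∑ i, A i ⬝ᵥ A i)
    (v : Fin n → ℝ) (σsq : ℝ) (hv : (Aᵀ * A).mulVec v = σsq • v)
    (β M : ℝ) (hβ : β ∈ Set.Ico (0:ℝ) 1) (hM : M ∈ Set.Icc (0:ℝ) 1)
    (ω : ℕ → Fin m) (x y : ℕ → Fin n → ℝ) (hy0 : y 0 = 0)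
    (hx : ∀ j, x (j+1) = x j
      + ((0 - A (ω j) ⬝ᵥ x j) / (A (ω j) ⬝ᵥ A (ω j))) • A (ω j) + M • y j)
    (hy : ∀ j, y (j+1) = β • y j + (1-β) • (x (j+1) - x j))
    (r ζ : ℝ) (hr : r = 1 - σsq/F + M*(1-β)) (hζ : ζ = M*(1-β)^2)
    (S : ℕ → ℝ)
    (hS : ∀ j, S j = (∑ i ∈ Finset.Icc 1 j, β^(j-i) * (x i ⬝ᵥ v))
      + β^j/(1-β) * (x 0 ⬝ᵥ v))
    (k : ℕ) (hk : 1 ≤ k) :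
    ∑ i, ((A i ⬝ᵥ A i) / F) *
        ((x k + ((0 - A i ⬝ᵥ x k) / (A i ⬝ᵥ A i)) • A i + M • y k) ⬝ᵥ v)
      = r * (x k ⬝ᵥ v) - ζ * S (k-1) := by

  obtain ⟨hβ0, hβ1⟩ := hβ
  have hβne : (1:ℝ) - β ≠ 0 := by linarith
  have : Nonempty (Fin m) := ⟨ω 0⟩
  have hFpos : 0 < F := by
    rw [hF]
    refine Finset.sum_pos (fun i _ => ?_) Finset.univ_nonempty
    have h1 : 0 ≤ A i ⬝ᵥ A i := Finset.sum_nonneg fun j _ => mul_self_nonneg _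
    exact lt_of_le_of_ne h1 (Ne.symm (hrow i))
  have hFne : F ≠ 0 := ne_of_gt hFpos
  -- recursion for S
  have hSrec : ∀ j : ℕ, S (j+1) = (x (j+1) ⬝ᵥ v) + β * S j := by
    intro j
    rw [hS, hS]
    rw [Finset.sum_Icc_succ_top (Nat.le_add_left 1 j)]
    have hsum : ∀ i ∈ Finset.Icc 1 j, β^(j+1-i) * (x i ⬝ᵥ v)
        = β * (β^(j-i) * (x i ⬝ᵥ v)) := by
      intro i hi
      rw [Finset.mem_Icc] at hi
      rw [show j+1-i = (j-i)+1 from by omega, pow_succ]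
      ring
    rw [Finset.sum_congr rfl hsum, ← Finset.mul_sum]
    simp only [pow_succ, Nat.sub_self, pow_zero, one_mul]
    ring
  -- formula for y j ⬝ᵥ v
  have hyv : ∀ j : ℕ, 1 ≤ j →
      y j ⬝ᵥ v = (1-β) * ((x j ⬝ᵥ v) - (1-β) * S (j-1)) := by
    intro j hj
    induction j with
    | zero => omega
    | succ j ih =>
      rcases Nat.eq_or_lt_of_le hj with h1 | h1
      · -- j + 1 = 1
        have hj0 : j = 0 := by omega
        subst hj0
        rw [hy 0, hy0]
        have hS0 : S 0 = β^0/(1-β) * (x 0 ⬝ᵥ v) := by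
          rw [hS]; simp
        simp only [Nat.add_sub_cancel, hS0]
        simp [add_dotProduct, smul_dotProduct, sub_dotProduct, smul_eq_mul]
        field_simp
        simp
      · have hj1 : 1 ≤ j := by omega
        have ihv := ih hj1
        rw [hy j]
        have hSj : S j = (x j ⬝ᵥ v) + β * S (j-1) := by
          have := hSrec (j-1)
          rwa [show j - 1 + 1 = j from by omega] at this
        simp only [Nat.add_sub_cancel, add_dotProduct, smul_dotProduct,
          sub_dotProduct, smul_eq_mul, ihv, hSj]
        ring
  -- key spectral identity
  have key : ∑ i, (A i ⬝ᵥ x k) * (A i ⬝ᵥ v) = σsq * (x k ⬝ᵥ v) := by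
    have h1 : ∑ i, (A i ⬝ᵥ x k) * (A i ⬝ᵥ v) = (A *ᵥ x k) ⬝ᵥ (A *ᵥ v) := rfl
    have h2 : x k ⬝ᵥ ((Aᵀ * A) *ᵥ v) = (A *ᵥ x k) ⬝ᵥ (A *ᵥ v) := by
      rw [← Matrix.mulVec_mulVec, Matrix.dotProduct_mulVec,
        Matrix.vecMul_transpose]
    rw [h1, ← h2, hv, dotProduct_smul, smul_eq_mul]
  -- expand the left-hand side
  have expand : ∀ i : Fin m,
      ((A i ⬝ᵥ A i) / F) *
        ((x k + ((0 - A i ⬝ᵥ x k) / (A i ⬝ᵥ A i)) • A i + M • y k) ⬝ᵥ v)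
      = ((A i ⬝ᵥ A i) / F) * ((x k ⬝ᵥ v) + M * (y k ⬝ᵥ v))
        - (1/F) * ((A i ⬝ᵥ x k) * (A i ⬝ᵥ v)) := by
    intro i
    simp only [add_dotProduct, smul_dotProduct, smul_eq_mul, zero_sub]
    field_simp [hrow i]
    ring
  rw [Finset.sum_congr rfl (fun i _ => expand i), Finset.sum_sub_distrib,
    ← Finset.sum_mul, ← Finset.mul_sum, key, ← Finset.sum_div, ← hF,
    div_self hFne, hyv k hk, hr, hζ]
  field_simp
  ring
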